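/- arXiv:2003.00625 — 3 statements merged into one kernel-verified Lean document; each statement's English description precedes it below -/
import Mathlib

section
/- For a tiered graph G with two tiers (possibly disconnected) and its dual graph G', and for any two vertices u < v of G, the vertices u and v lie in the same connected component of G if and only if they lie in the same connected component of G'. -/
open Finset

attribute [local instance 10] Classical.propDecidable

noncomputable section

/-- An edge of a simple graph on `ℕ`, stored as an ordered pair `(u,v)` with `u < v` intended. -/
abbrev PEdge : Type := ℕ × ℕ

/-- A labelled edge (for multigraphs): an endpoint pair together with a label. -/
abbrev LEdge : Type := (ℕ × ℕ) × ℕ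

def adjP (E : Finset PEdge) (u v : ℕ) : Prop := (u, v) ∈ E ∨ (v, u) ∈ E

def reachP (E : Finset PEdge) : ℕ → ℕ → Prop := Relation.ReflTransGen (adjP E)

def connP (V : Finset ℕ) (E : Finset PEdge) : Prop :=
  (∀ e ∈ E, e.1 ∈ V ∧ e.2 ∈ V) ∧ ∀ u ∈ V, ∀ v ∈ V, reachP E u v

def IsTreeOn (V : Finset ℕ) (E : Finset PEdge) : Prop := connP V E ∧ E.card + 1 = V.card

/-- A graph on a finite set of naturals together with a tiering map. -/
structure PreGraph where
  V : Finset ℕ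
  E : Finset PEdge
  t : ℕ → ℕ

/-- `G` is a tiered graph with two tiers. -/
def IsTiered (G : PreGraph) : Prop :=
  (∀ v ∈ G.V, 0 < v) ∧
  (∀ e ∈ G.E, e.1 ∈ G.V ∧ e.2 ∈ G.V ∧ e.1 < e.2) ∧
  (∀ v ∈ G.V, G.t v = 1 ∨ G.t v = 2) ∧
  (∀ e ∈ G.E, G.t e.1 < G.t e.2)

/-- acyclicity: every edge is a bridge. -/
def IsForest (G : PreGraph) : Prop := ∀ e ∈ G.E, ¬ reachP (G.E.erase e) e.1 e.2

def IsTreeG (G : PreGraph) : Prop := IsTreeOn G.V G.E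

/-- the connected component (vertex set) of `x`. -/
def comp (V : Finset ℕ) (E : Finset PEdge) (x : ℕ) : Finset ℕ :=
  V.filter fun y => reachP E x y

/-- the order-reversing involution `x_i ↦ x_{s+1-i}` of a finite set `V = {x_1 < ... < x_s}`. -/
def flipMap (V : Finset ℕ) (x : ℕ) : ℕ :=
  if hx : x ∈ V then
    ((V.orderIsoOfFin rfl)
      ⟨V.card - 1 - ((V.orderIsoOfFin rfl).symm ⟨x, hx⟩).1, by
        have h := ((V.orderIsoOfFin rfl).symm ⟨x, hx⟩).isLt; omega⟩).1
  else x

/-- the dual of a (connected) tiered graph, via the global vertex ordering. -/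
def dual (G : PreGraph) : PreGraph where
  V := G.V
  E := G.E.image fun e => (flipMap G.V e.2, flipMap G.V e.1)
  t := fun x => if x ∈ G.V then 3 - G.t (flipMap G.V x) else G.t x

/-- the componentwise dual of a (possibly disconnected) tiered graph. -/
def cdual (G : PreGraph) : PreGraph where
  V := G.V
  E := G.E.image fun e => (flipMap (comp G.V G.E e.1) e.2, flipMap (comp G.V G.E e.1) e.1)
  t := fun x => if x ∈ G.V then 3 - G.t (flipMap (comp G.V G.E x) x) else G.t x

/-- the recursive weight of a tiered tree (fuel-based implementation; the recursion
depth is bounded by the number of vertices). -/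
def weightAux : ℕ → PreGraph → ℕ
  | 0, _ => 0
  | fuel + 1, T =>
    if h : 2 ≤ T.V.card then
      let v := T.V.min' (Finset.card_pos.mp (by omega))
      let V' := T.V.erase v
      let E' := T.E.filter fun e => e.1 ≠ v ∧ e.2 ≠ v
      ∑ u ∈ V'.filter (fun u => adjP T.E v u),
        (((comp V' E' u).filter fun y => y < u ∧ T.t v < T.t y).card
          + weightAux fuel ⟨comp V' E' u, E'.filter fun e => e.1 ∈ comp V' E' u, T.t⟩)
    else 0

def weight (T : PreGraph) : ℕ := weightAux T.V.card T

/-- edges of a complete tiered graph with tier 1 vertex set `A` and tier 2 vertex set `B`. -/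
def ctE2 (A B : Finset ℕ) : Finset PEdge := (A ×ˢ B).filter fun e => e.1 < e.2

/-- the edge set of the complete tiered graph determined by a two-tier tiered graph `G`. -/
def ctE (G : PreGraph) : Finset PEdge :=
  ctE2 (G.V.filter fun v => G.t v = 1) (G.V.filter fun v => G.t v = 2)

/-- edge set of the complete tiered graph on `[n]` determined by a tiering map `t`. -/
def ctEM (n : ℕ) (t : ℕ → ℕ) : Finset PEdge :=
  (Finset.Icc 1 n ×ˢ Finset.Icc 1 n).filter fun e => e.1 < e.2 ∧ t e.1 < t e.2

def extActiveP (T : Finset PEdge) (ω : PEdge → ℝ) (e : PEdge) : Prop :=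
  e ∉ T ∧ reachP T e.1 e.2 ∧ ∀ e' ∈ T, ¬ reachP (T.erase e') e.1 e.2 → ω e < ω e'

/-- external activity of the spanning forest `T` in the graph with edge set `E`. -/
def eaP (E T : Finset PEdge) (ω : PEdge → ℝ) : ℕ := (E.filter (extActiveP T ω)).card

def adjL (E : Finset LEdge) (u v : ℕ) : Prop := ∃ e ∈ E, e.1 = (u, v) ∨ e.1 = (v, u)
def reachL (E : Finset LEdge) : ℕ → ℕ → Prop := Relation.ReflTransGen (adjL E)
def connL (V : Finset ℕ) (E : Finset LEdge) : Prop := ∀ u ∈ V, ∀ v ∈ V, reachL E u v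
def IsLTree (V : Finset ℕ) (T : Finset LEdge) : Prop := connL V T ∧ T.card + 1 = V.card

def extActiveL (T : Finset LEdge) (ω : LEdge → ℝ) (e : LEdge) : Prop :=
  e ∉ T ∧ reachL T e.1.1 e.1.2 ∧ ∀ e' ∈ T, ¬ reachL (T.erase e') e.1.1 e.1.2 → ω e < ω e'

def eaL (E T : Finset LEdge) (ω : LEdge → ℝ) : ℕ := (E.filter (extActiveL T ω)).card

def omega1 (N : ℕ) (e : PEdge) : ℝ := (e.1 : ℝ) + (e.2 : ℝ) / (N : ℝ)
def omega2 (N : ℕ) (e : PEdge) : ℝ := ((N + 1 - e.2 : ℕ) : ℝ) + ((N + 1 - e.1 : ℕ) : ℝ) / (N : ℝ)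
def omegaLex (n : ℕ) (e : PEdge) : ℝ := ((e.1 * (n + 1) + e.2 : ℕ) : ℝ)

/-- representative (minimum) of the component of `x` in the forest `F` on vertex set `V`. -/
def rep (V : Finset ℕ) (F : Finset LEdge) (x : ℕ) : ℕ :=
  if hx : x ∈ V then
    (V.filter fun y => reachL F x y).min'
      ⟨x, Finset.mem_filter.mpr ⟨hx, Relation.ReflTransGen.refl⟩⟩
  else x

/-- image of an edge in the quotient graph `G • F`; the label encodes the original edge. -/
def quotEdge (ρ : ℕ → ℕ) (e : LEdge) : LEdge :=
  ((ρ e.1.1, ρ e.1.2), Nat.pair (Nat.pair e.1.1 e.1.2) e.2)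

/-- recover the original edge from a quotient edge. -/
def decodeE (e : LEdge) : LEdge :=
  (((Nat.unpair (Nat.unpair e.2).1).1, (Nat.unpair (Nat.unpair e.2).1).2), (Nat.unpair e.2).2)

/-- tiering map on `[n]` induced by `f : Fin n → Fin m` (tiers `1,...,m`). -/
def tf (n m : ℕ) (f : Fin n → Fin m) : ℕ → ℕ := fun v =>
  if h : v ∈ Finset.Icc 1 n then
    (f ⟨v - 1, by have := Finset.mem_Icc.mp h; omega⟩).1 + 1
  else 0

/-- `G` is a tiered graph with `m` tiers. -/
def IsTieredM (m : ℕ) (G : PreGraph) : Prop :=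
  (∀ e ∈ G.E, e.1 ∈ G.V ∧ e.2 ∈ G.V ∧ e.1 < e.2) ∧
  (∀ v ∈ G.V, G.t v ∈ Finset.Icc 1 m) ∧
  (∀ e ∈ G.E, G.t e.1 < G.t e.2) ∧
  (∀ i ∈ Finset.Icc 1 m, ∃ v ∈ G.V, G.t v = i)

/-- weight polynomial `P_p(q)` (recursive weight), evaluated at `q`. -/
def Pw (n m : ℕ) (p : ℕ → ℕ) (q : ℤ) : ℤ :=
  ∑ f : Fin n → Fin m,
    ∑ E ∈ ((Finset.Icc 1 n ×ˢ Finset.Icc 1 n).powerset.filter fun E =>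
        IsTreeG ⟨Finset.Icc 1 n, E, tf n m f⟩ ∧ IsTieredM m ⟨Finset.Icc 1 n, E, tf n m f⟩ ∧
        ∀ i ∈ Finset.Icc 1 m, ((Finset.Icc 1 n).filter fun v => tf n m f v = i).card = p i),
      q ^ weight ⟨Finset.Icc 1 n, E, tf n m f⟩

/-- weight polynomial `P_p(q)` with the weight of a tiered tree given by its external
activity in the complete tiered graph it determines (lexicographic edge order). -/
def PwEA (n m : ℕ) (p : ℕ → ℕ) (q : ℤ) : ℤ :=
  ∑ f : Fin n → Fin m,
    ∑ E ∈ ((Finset.Icc 1 n ×ˢ Finset.Icc 1 n).powerset.filter fun E =>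
        IsTreeG ⟨Finset.Icc 1 n, E, tf n m f⟩ ∧ IsTieredM m ⟨Finset.Icc 1 n, E, tf n m f⟩ ∧
        ∀ i ∈ Finset.Icc 1 m, ((Finset.Icc 1 n).filter fun v => tf n m f v = i).card = p i),
      q ^ eaP (ctEM n (tf n m f)) E (omegaLex n)

/-- `T^c_G(y)`: the Tutte evaluation `T_G(1,y)` (spanning tree expansion) for a connected
graph, `0` otherwise. -/
def TcP (V : Finset ℕ) (E : Finset PEdge) (ω : PEdge → ℝ) (y : ℤ) : ℤ :=
  if connP V E then ∑ T ∈ E.powerset.filter (fun T => IsTreeOn V T), y ^ eaP E T ω else 0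

/-- edge multiset of `H ∪ Q_S`: `H`-edges (labels `≠ 0`) together with the complete
tiered graph on `U` with tier-1 set `S` (labelled `0`). -/
def qE (U : Finset ℕ) (EH : Finset LEdge) (S : Finset ℕ) : Finset LEdge :=
  EH ∪ (ctE2 S (U \ S)).image fun p => (p, 0)

/-- `(S,T) ↦ (S*, T*)`: the dual quasi-tiered tree. -/
def dualTree (U : Finset ℕ) (ST : Finset ℕ × Finset LEdge) : Finset ℕ × Finset LEdge :=
  (U.filter fun v =>
      (cdual ⟨U, (ST.2.filter fun e => e.2 = 0).image Prod.fst,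
        fun w => if w ∈ ST.1 then 1 else 2⟩).t v = 1,
   (ST.2.filter fun e => e.2 ≠ 0) ∪
     (cdual ⟨U, (ST.2.filter fun e => e.2 = 0).image Prod.fst,
        fun w => if w ∈ ST.1 then 1 else 2⟩).E.image fun p => (p, 0))

/-- tiered forests on `U` with tier sizes `(p1, p2)` (tier map normalised off `U`). -/
def ForestSet (U : Finset ℕ) (p1 p2 : ℕ) : Set PreGraph :=
  {F | F.V = U ∧ IsTiered F ∧ IsForest F ∧
    (U.filter fun v => F.t v = 1).card = p1 ∧
    (U.filter fun v => F.t v = 2).card = p2 ∧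
    ∀ v, v ∉ U → F.t v = 0}

lemma adjP_symm {E : Finset PEdge} {a b : ℕ} (h : adjP E a b) : adjP E b a := h.symm

lemma reachP_symm {E : Finset PEdge} {a b : ℕ} (h : reachP E a b) : reachP E b a :=
  by
  induction h with
  | refl => exact Relation.ReflTransGen.refl
  | tail _ hbc ih => exact Relation.ReflTransGen.head (adjP_symm hbc) ih

lemma comp_eq {V : Finset ℕ} {E : Finset PEdge} {x y : ℕ} (h : reachP E x y) :
    comp V E x = comp V E y := by
  ext z
  simp only [comp, mem_filter, and_congr_right_iff]
  exact fun _ => ⟨fun hz => (reachP_symm h).trans hz, fun hz => h.trans hz⟩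

lemma flip_mem {V : Finset ℕ} {x : ℕ} (hx : x ∈ V) : flipMap V x ∈ V := by
  rw [flipMap, dif_pos hx]
  exact ((V.orderIsoOfFin rfl) _).2

lemma flip_idx {V : Finset ℕ} {y : ℕ} (hy : y ∈ V) (h2 : flipMap V y ∈ V) :
    (((V.orderIsoOfFin rfl).symm ⟨flipMap V y, h2⟩ : Fin V.card) : ℕ) =
      V.card - 1 - (((V.orderIsoOfFin rfl).symm ⟨y, hy⟩ : Fin V.card) : ℕ) := by
  have key : (⟨flipMap V y, h2⟩ : {z // z ∈ V}) =
      (V.orderIsoOfFin rfl) ⟨V.card - 1 - ((V.orderIsoOfFin rfl).symm ⟨y, hy⟩).1, by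
        have := ((V.orderIsoOfFin rfl).symm ⟨y, hy⟩).isLt; omega⟩ :=
    Subtype.ext (dif_pos hy)
  rw [key, OrderIso.symm_apply_apply]

lemma flipMap_flip_flip {V : Finset ℕ} {x : ℕ} (hx : x ∈ V) : flipMap V (flipMap V x) = x := by
  have hf : flipMap V x ∈ V := flip_mem hx
  have hff : flipMap V (flipMap V x) ∈ V := flip_mem hf
  have i1 := flip_idx hx hf
  have i2 := flip_idx hf hff
  have hlt : (((V.orderIsoOfFin rfl).symm ⟨x, hx⟩ : Fin V.card) : ℕ) < V.card := Fin.isLt _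
  have h3 : (V.orderIsoOfFin rfl).symm ⟨flipMap V (flipMap V x), hff⟩ =
      (V.orderIsoOfFin rfl).symm ⟨x, hx⟩ := Fin.ext (by rw [i2, i1]; omega)
  have h4 := congrArg (V.orderIsoOfFin rfl) h3
  rw [OrderIso.apply_symm_apply, OrderIso.apply_symm_apply] at h4
  exact congrArg Subtype.val h4

lemma mem_comp_self {V : Finset ℕ} {E : Finset PEdge} {x : ℕ} (hx : x ∈ V) :
    x ∈ comp V E x := mem_filter.mpr ⟨hx, Relation.ReflTransGen.refl⟩

lemma reach_lift {r s : ℕ → ℕ → Prop} (h : ∀ a b, r a b → Relation.ReflTransGen s a b)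
    {a b : ℕ} (hab : Relation.ReflTransGen r a b) : Relation.ReflTransGen s a b := by
  induction hab with
  | refl => exact Relation.ReflTransGen.refl
  | tail _ hbc ih => exact ih.trans (h _ _ hbc)

lemma reach_to_cdual (G : PreGraph) {a b : ℕ} (h : reachP G.E a b) :
    reachP (cdual G).E (flipMap (comp G.V G.E a) a) (flipMap (comp G.V G.E a) b) := by
  induction h with
  | refl => exact Relation.ReflTransGen.refl
  | @tail b c hab hbc ih =>
    refine ih.tail ?_
    have hca : comp G.V G.E b = comp G.V G.E a := (comp_eq hab).symm
    rcases hbc with he | he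
    · -- (b, c) ∈ G.E
      refine Or.inr ?_
      have : (flipMap (comp G.V G.E b) c, flipMap (comp G.V G.E b) b) ∈ (cdual G).E :=
        Finset.mem_image_of_mem _ he
      rwa [hca] at this
    · -- (c, b) ∈ G.E
      refine Or.inl ?_
      have hcb : comp G.V G.E c = comp G.V G.E a := by
        rw [← hca]
        exact comp_eq (Relation.ReflTransGen.single (Or.inl he))
      have : (flipMap (comp G.V G.E c) b, flipMap (comp G.V G.E c) c) ∈ (cdual G).E :=
        Finset.mem_image_of_mem _ he
      rwa [hcb] at this

lemma cdual_adj_reach (G : PreGraph) (hT : IsTiered G) {a b : ℕ}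
    (h : adjP (cdual G).E a b) : reachP G.E a b := by
  have main : ∀ x y, (x, y) ∈ (cdual G).E → reachP G.E x y := by
    intro x y hxy
    rcases Finset.mem_image.mp hxy with ⟨e, he, heq⟩
    obtain ⟨h1, h2, _⟩ := hT.2.1 e he
    have hreach : reachP G.E e.1 e.2 := Relation.ReflTransGen.single (Or.inl he)
    have h2c : e.2 ∈ comp G.V G.E e.1 := Finset.mem_filter.mpr ⟨h2, hreach⟩
    have h1c : e.1 ∈ comp G.V G.E e.1 := mem_comp_self h1
    have hx : flipMap (comp G.V G.E e.1) e.2 ∈ comp G.V G.E e.1 := flip_mem h2c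
    have hy : flipMap (comp G.V G.E e.1) e.1 ∈ comp G.V G.E e.1 := flip_mem h1c
    have rx : reachP G.E e.1 (flipMap (comp G.V G.E e.1) e.2) := (Finset.mem_filter.mp hx).2
    have ry : reachP G.E e.1 (flipMap (comp G.V G.E e.1) e.1) := (Finset.mem_filter.mp hy).2
    have : reachP G.E (flipMap (comp G.V G.E e.1) e.2) (flipMap (comp G.V G.E e.1) e.1) :=
      (reachP_symm rx).trans ry
    obtain ⟨hx', hy'⟩ := Prod.mk.injEq .. ▸ heq
    rw [hx', hy'] at this
    exact this
  rcases h with h | h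
  · exact main _ _ h
  · exact reachP_symm (main _ _ h)

/-- for a (possibly disconnected) tiered graph `G` with two tiers and
its (componentwise) dual `G'`, vertices `u < v` lie in the same component of `G`
iff they lie in the same component of `G'`. -/
theorem stmt4 (G : PreGraph) (hT : IsTiered G)
    (u v : ℕ) (hu : u ∈ G.V) (hv : v ∈ G.V) (huv : u < v) :
    reachP G.E u v ↔ reachP (cdual G).E u v := by
  constructor
  · intro h
    set C := comp G.V G.E u with hC
    have huC : u ∈ C := mem_comp_self hu
    have hvC : v ∈ C := Finset.mem_filter.mpr ⟨hv, h⟩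
    have hfu : flipMap C u ∈ C := flip_mem huC
    have hfv : flipMap C v ∈ C := flip_mem hvC
    have ru : reachP G.E u (flipMap C u) := (Finset.mem_filter.mp hfu).2
    have rv : reachP G.E u (flipMap C v) := (Finset.mem_filter.mp hfv).2
    have h' : reachP G.E (flipMap C u) (flipMap C v) := (reachP_symm ru).trans rv
    have key := reach_to_cdual G h'
    have hcomp : comp G.V G.E (flipMap C u) = C := (comp_eq ru).symm
    rw [hcomp, flipMap_flip_flip huC, flipMap_flip_flip hvC] at key
    exact key
  · intro h
    exact reach_lift (fun a b hab => cdual_adj_reach G hT hab) h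

end
end

section
/- Let G be a connected graph with an injective weight function ω: E(G) → ℝ, let T be a spanning tree of G, and suppose E(G) is partitioned into E_1 and E_2 such that ω(e_1) < ω(e_2) for all e_1 ∈ E_1 and e_2 ∈ E_2. Let F be the spanning forest of G with edge set E(T) ∩ E_2. Then the external activity of T in G equals the external activity of T•F in (G⟨E_1⟩)•F plus the external activity of F in G⟨E_2⟩. -/
open Finset

attribute [local instance 10] Classical.propDecidable

noncomputable section

section Stmt8Aux

variable {E S T : Finset LEdge} {a b u v w : ℕ}

lemma adjL_mono (h : E ⊆ S) (had : adjL E u v) : adjL S u v := by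
  obtain ⟨e, he, h2⟩ := had; exact ⟨e, h he, h2⟩

lemma reachL_mono (h : E ⊆ S) (hr : reachL E u v) : reachL S u v :=
  Relation.ReflTransGen.mono (fun _ _ => adjL_mono h) _ _ hr

lemma adjL_symm (had : adjL E u v) : adjL E v u := by
  obtain ⟨e, he, h2⟩ := had; exact ⟨e, he, h2.symm⟩

lemma reachL_symm (hr : reachL E u v) : reachL E v u :=
  by
    haveI : Std.Symm (adjL E) := ⟨fun _ _ => adjL_symm⟩
    exact Std.Symm.symm (r := Relation.ReflTransGen (adjL E)) _ _ hr

lemma reachL_trans (h1 : reachL E u v) (h2 : reachL E v w) : reachL E u w :=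
  Relation.ReflTransGen.trans h1 h2

lemma reachL_of_mem {e : LEdge} (he : e ∈ E) : reachL E e.1.1 e.1.2 :=
  Relation.ReflTransGen.single ⟨e, he, Or.inl rfl⟩

lemma reach_erase_decomp {e : LEdge} (h : reachL E a b) :
    reachL (E.erase e) a b ∨
      (reachL (E.erase e) a e.1.1 ∧ reachL (E.erase e) e.1.2 b) ∨
      (reachL (E.erase e) a e.1.2 ∧ reachL (E.erase e) e.1.1 b) := by
  induction h using Relation.ReflTransGen.head_induction_on with
  | refl => exact Or.inl Relation.ReflTransGen.refl
  | head had hr ih =>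
    rename_i x c
    obtain ⟨g, hg, hor⟩ := had
    by_cases hge : g = e
    · subst hge
      rcases hor with h1 | h1
      · have h11 : g.1.1 = x := by rw [h1]
        have h12 : g.1.2 = c := by rw [h1]
        subst h11; subst h12
        rcases ih with h' | ⟨h1', h2'⟩ | ⟨h1', h2'⟩
        · exact Or.inr (Or.inl ⟨Relation.ReflTransGen.refl, h'⟩)
        · exact Or.inr (Or.inl ⟨Relation.ReflTransGen.refl, h2'⟩)
        · exact Or.inl h2'
      · have h11 : g.1.1 = c := by rw [h1]
        have h12 : g.1.2 = x := by rw [h1]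
        subst h11; subst h12
        rcases ih with h' | ⟨h1', h2'⟩ | ⟨h1', h2'⟩
        · exact Or.inr (Or.inr ⟨Relation.ReflTransGen.refl, h'⟩)
        · exact Or.inl h2'
        · exact Or.inr (Or.inr ⟨Relation.ReflTransGen.refl, h2'⟩)
    · have had' : adjL (E.erase e) x c := ⟨g, Finset.mem_erase.mpr ⟨hge, hg⟩, hor⟩
      rcases ih with h' | ⟨h1', h2'⟩ | ⟨h1', h2'⟩
      · exact Or.inl (Relation.ReflTransGen.head had' h')
      · exact Or.inr (Or.inl ⟨Relation.ReflTransGen.head had' h1', h2'⟩)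
      · exact Or.inr (Or.inr ⟨Relation.ReflTransGen.head had' h1', h2'⟩)

lemma crossing (hT : reachL T a b) (hS : ¬ reachL S a b) :
    ∃ f ∈ T, (reachL S a f.1.1 ∧ ¬reachL S a f.1.2) ∨
      (reachL S a f.1.2 ∧ ¬reachL S a f.1.1) := by
  have aux : ∀ x, reachL T x b → reachL S a x →
      (∃ f ∈ T, (reachL S a f.1.1 ∧ ¬reachL S a f.1.2) ∨
        (reachL S a f.1.2 ∧ ¬reachL S a f.1.1)) ∨ reachL S a b := by
    intro x hx
    induction hx using Relation.ReflTransGen.head_induction_on with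
    | refl => exact fun h => Or.inr h
    | head had hr ih =>
      rename_i z c
      intro haz
      by_cases hac : reachL S a c
      · exact ih hac
      · obtain ⟨g, hg, hor⟩ := had
        refine Or.inl ⟨g, hg, ?_⟩
        rcases hor with h1 | h1
        · have h11 : g.1.1 = z := by rw [h1]
          have h12 : g.1.2 = c := by rw [h1]
          exact Or.inl ⟨by rw [h11]; exact haz, by rw [h12]; exact hac⟩
        · have h11 : g.1.1 = c := by rw [h1]
          have h12 : g.1.2 = z := by rw [h1]
          exact Or.inr ⟨by rw [h12]; exact haz, by rw [h11]; exact hac⟩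
  rcases aux a hT Relation.ReflTransGen.refl with h | h
  · exact h
  · exact absurd h hS

lemma eq_of_reachL_empty (h : reachL ∅ u v) : u = v := by
  induction h with
  | refl => rfl
  | tail _ had ih => obtain ⟨g, hg, -⟩ := had; exact absurd hg (Finset.notMem_empty g)

lemma conn_card : ∀ (n : ℕ) (E : Finset LEdge) (V : Finset ℕ), E.card ≤ n →
    (∀ f ∈ E, f.1.1 ∈ V ∧ f.1.2 ∈ V) → connL V E → V.card ≤ E.card + 1 := by
  intro n
  induction n with
  | zero =>
    intro E V hn hEV hc
    have hE0 : E = ∅ := Finset.card_eq_zero.mp (Nat.le_zero.mp hn)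
    subst hE0
    have : V.card ≤ 1 := Finset.card_le_one.mpr fun u hu v hv => eq_of_reachL_empty (hc u hu v hv)
    omega
  | succ n ih =>
    intro E V hn hEV hc
    rcases Finset.eq_empty_or_nonempty E with rfl | ⟨e, he⟩
    · have : V.card ≤ 1 := Finset.card_le_one.mpr fun u hu v hv => eq_of_reachL_empty (hc u hu v hv)
      omega
    have hcard' : (E.erase e).card = E.card - 1 := Finset.card_erase_of_mem he
    have hcard1 : 1 ≤ E.card := Finset.card_pos.mpr ⟨e, he⟩
    obtain ⟨he1V, he2V⟩ := hEV e he
    set E' := E.erase e with hE'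
    by_cases hbridge : reachL E' e.1.1 e.1.2
    · have hc' : connL V E' := by
        intro x hx y hy
        rcases reach_erase_decomp (e := e) (hc x hx y hy) with h | ⟨h1, h2⟩ | ⟨h1, h2⟩
        · exact h
        · exact reachL_trans h1 (reachL_trans hbridge h2)
        · exact reachL_trans h1 (reachL_trans (reachL_symm hbridge) h2)
      have := ih E' V (by omega) (fun f hf => hEV f (Finset.mem_of_mem_erase hf)) hc'
      omega
    · have hK : ∀ (p : ℕ → Prop) (W : Finset LEdge), (∀ g ∈ E', p g.1.1 → g ∈ W) →
          (∀ g ∈ E', (p g.1.1 ↔ p g.1.2)) →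
          ∀ x y, reachL E' x y → p x → reachL W x y := by
        intro p W hmem hp x y hxy
        induction hxy using Relation.ReflTransGen.head_induction_on with
        | refl => exact fun _ => Relation.ReflTransGen.refl
        | head had hr ihh =>
          rename_i z c
          intro hz
          obtain ⟨g, hg, hor⟩ := had
          rcases hor with h1 | h1
          · have h11 : g.1.1 = z := by rw [h1]
            have h12 : g.1.2 = c := by rw [h1]
            have hpg1 : p g.1.1 := by rw [h11]; exact hz
            have hpc : p c := by rw [← h12]; exact (hp g hg).mp hpg1
            exact Relation.ReflTransGen.head ⟨g, hmem g hg hpg1, Or.inl h1⟩ (ihh hpc)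
          · have h11 : g.1.1 = c := by rw [h1]
            have h12 : g.1.2 = z := by rw [h1]
            have hpg2 : p g.1.2 := by rw [h12]; exact hz
            have hpg1 : p g.1.1 := (hp g hg).mpr hpg2
            have hpc : p c := by rw [← h11]; exact hpg1
            exact Relation.ReflTransGen.head ⟨g, hmem g hg hpg1, Or.inr h1⟩ (ihh hpc)
      have hclo : ∀ g ∈ E', (reachL E' e.1.1 g.1.1 ↔ reachL E' e.1.1 g.1.2) :=
        fun g hg => ⟨fun h => reachL_trans h (reachL_of_mem hg),
          fun h => reachL_trans h (reachL_symm (reachL_of_mem hg))⟩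
      have hcloN : ∀ g ∈ E', ((¬reachL E' e.1.1 g.1.1) ↔ (¬reachL E' e.1.1 g.1.2)) :=
        fun g hg => not_congr (hclo g hg)
      have h12 : ∀ x ∈ V, ¬reachL E' e.1.1 x → reachL E' e.1.2 x := by
        intro x hx hnx
        rcases reach_erase_decomp (e := e) (hc e.1.2 he2V x hx) with h | ⟨h1, h2⟩ | ⟨h1, h2⟩
        · exact h
        · exact h2
        · exact absurd h2 hnx
      set A := V.filter fun x => reachL E' e.1.1 x with hA
      set B := V.filter fun x => ¬reachL E' e.1.1 x with hB
      set EA := E'.filter fun g => reachL E' e.1.1 g.1.1 with hEA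
      set EB := E'.filter fun g => ¬reachL E' e.1.1 g.1.1 with hEB
      have hcA : connL A EA := by
        intro x hx y hy
        obtain ⟨hxV, hxr⟩ := Finset.mem_filter.mp hx
        obtain ⟨hyV, hyr⟩ := Finset.mem_filter.mp hy
        refine hK (fun w => reachL E' e.1.1 w) EA ?_ hclo x y (reachL_trans (reachL_symm hxr) hyr) hxr
        intro g hg hpg
        rw [hEA]
        exact Finset.mem_filter.mpr ⟨hg, hpg⟩
      have hcB : connL B EB := by
        intro x hx y hy
        obtain ⟨hxV, hxr⟩ := Finset.mem_filter.mp hx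
        obtain ⟨hyV, hyr⟩ := Finset.mem_filter.mp hy
        refine hK (fun w => ¬reachL E' e.1.1 w) EB ?_ hcloN x y
          (reachL_trans (reachL_symm (h12 x hxV hxr)) (h12 y hyV hyr)) hxr
        intro g hg hpg
        rw [hEB]
        exact Finset.mem_filter.mpr ⟨hg, hpg⟩
      have hEVA : ∀ f ∈ EA, f.1.1 ∈ A ∧ f.1.2 ∈ A := by
        intro f hf
        obtain ⟨hfE, hfr⟩ := Finset.mem_filter.mp hf
        obtain ⟨h1V, h2V⟩ := hEV f (Finset.mem_of_mem_erase hfE)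
        exact ⟨Finset.mem_filter.mpr ⟨h1V, hfr⟩,
          Finset.mem_filter.mpr ⟨h2V, (hclo f hfE).mp hfr⟩⟩
      have hEVB : ∀ f ∈ EB, f.1.1 ∈ B ∧ f.1.2 ∈ B := by
        intro f hf
        obtain ⟨hfE, hfr⟩ := Finset.mem_filter.mp hf
        obtain ⟨h1V, h2V⟩ := hEV f (Finset.mem_of_mem_erase hfE)
        exact ⟨Finset.mem_filter.mpr ⟨h1V, hfr⟩,
          Finset.mem_filter.mpr ⟨h2V, (hcloN f hfE).mp hfr⟩⟩
      have hEAn : EA.card ≤ n := by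
        have h9 : EA.card ≤ E'.card := Finset.card_le_card (Finset.filter_subset _ _)
        omega
      have hEBn : EB.card ≤ n := by
        have h9 : EB.card ≤ E'.card := Finset.card_le_card (Finset.filter_subset _ _)
        omega
      have hihA := ih EA A hEAn hEVA hcA
      have hihB := ih EB B hEBn hEVB hcB
      have hVsum : A.card + B.card = V.card := by
        rw [hA, hB]
        exact Finset.card_filter_add_card_filter_not (fun x : ℕ => reachL E' e.1.1 x)
      have hEsum : EA.card + EB.card = E'.card := by
        rw [hEA, hEB]
        exact Finset.card_filter_add_card_filter_not (fun g : LEdge => reachL E' e.1.1 g.1.1)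
      omega

lemma tree_bridge {V : Finset ℕ} (hEV : ∀ f ∈ T, f.1.1 ∈ V ∧ f.1.2 ∈ V)
    (hT : IsLTree V T) {e : LEdge} (he : e ∈ T) : ¬reachL (T.erase e) e.1.1 e.1.2 := by
  intro hre
  have hc' : connL V (T.erase e) := by
    intro x hx y hy
    rcases reach_erase_decomp (e := e) (hT.1 x hx y hy) with h | ⟨h1, h2⟩ | ⟨h1, h2⟩
    · exact h
    · exact reachL_trans h1 (reachL_trans hre h2)
    · exact reachL_trans h1 (reachL_trans (reachL_symm hre) h2)
  have hcc := conn_card (T.erase e).card (T.erase e) V le_rfl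
      (fun f hf => hEV f (Finset.mem_of_mem_erase hf)) hc'
  have h1 := Finset.card_erase_of_mem he
  have h2 := hT.2
  have h3 : 1 ≤ T.card := Finset.card_pos.mpr ⟨e, he⟩
  omega

lemma forest_erase_pres (hfor : ∀ g ∈ T, ¬reachL (T.erase g) g.1.1 g.1.2)
    {f e' : LEdge} (hf : f ∈ T)
    (h1 : reachL (T.erase f) a b) (h2 : reachL (T.erase e') a b) :
    reachL ((T.erase f).erase e') a b := by
  have hcomm : (T.erase e').erase f = (T.erase f).erase e' := Finset.erase_right_comm
  have hsub : (T.erase f).erase e' ⊆ T.erase f := Finset.erase_subset _ _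
  rcases reach_erase_decomp (e := f) h2 with h | ⟨ha, hb⟩ | ⟨ha, hb⟩
  · rwa [hcomm] at h
  · rw [hcomm] at ha hb
    exact absurd (reachL_trans (reachL_trans (reachL_symm (reachL_mono hsub ha)) h1)
      (reachL_symm (reachL_mono hsub hb))) (hfor f hf)
  · rw [hcomm] at ha hb
    exact absurd (reachL_trans (reachL_trans (reachL_mono hsub hb) (reachL_symm h1))
      (reachL_mono hsub ha)) (hfor f hf)

lemma reach_sub_of_cut : ∀ (n : ℕ) (T S : Finset LEdge) (a b : ℕ), T.card ≤ n → S ⊆ T →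
    (∀ g ∈ T, ¬reachL (T.erase g) g.1.1 g.1.2) → reachL T a b →
    (∀ g ∈ T, ¬reachL (T.erase g) a b → g ∈ S) → reachL S a b := by
  intro n
  induction n with
  | zero =>
    intro T S a b hn hS hfor hab hcut
    by_cases h : reachL S a b
    · exact h
    · obtain ⟨f, hf, -⟩ := crossing hab h
      rw [Finset.card_eq_zero.mp (Nat.le_zero.mp hn)] at hf
      exact absurd hf (Finset.notMem_empty f)
  | succ n ih =>
    intro T S a b hn hS hfor hab hcut
    by_cases h : reachL S a b
    · exact h
    obtain ⟨f, hf, hcross⟩ := crossing hab h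
    have hfS : f ∉ S := by
      intro hfS
      rcases hcross with ⟨h1, h2⟩ | ⟨h1, h2⟩
      · exact h2 (reachL_trans h1 (reachL_of_mem hfS))
      · exact h2 (reachL_trans h1 (reachL_symm (reachL_of_mem hfS)))
    have hrf : reachL (T.erase f) a b := by
      by_contra hcon
      exact hfS (hcut f hf hcon)
    refine ih (T.erase f) S a b ?_ ?_ ?_ hrf ?_
    · have hc1 := Finset.card_erase_of_mem hf
      have hc2 : 1 ≤ T.card := Finset.card_pos.mpr ⟨f, hf⟩
      omega
    · intro z hz
      exact Finset.mem_erase.mpr ⟨fun hzf => hfS (hzf ▸ hz), hS hz⟩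
    · intro g hg hre
      exact hfor g (Finset.mem_of_mem_erase hg)
        (reachL_mono (Finset.erase_subset_erase g (Finset.erase_subset f T)) hre)
    · intro g hg hng
      apply hcut g (Finset.mem_of_mem_erase hg)
      intro hr2
      exact hng (forest_erase_pres hfor hf hrf hr2)

end Stmt8Aux

/-- if the injective weights on `E = E1 ⊎ E2` satisfy `ω(E1) < ω(E2)`,
`T` is a spanning tree of the connected graph `(V,E)` and `F = T ∩ E2`, then
`ea(T) = ea(T•F in G⟨E1⟩•F) + ea(F in G⟨E2⟩)`.  The quotient `•F` is realised by
mapping each vertex to the minimum of its `F`-component; quotient edges keep their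
original edge encoded in the label, and the weight descends via `decodeE`. -/
theorem stmt8 (V : Finset ℕ) (E : Finset LEdge) (ω : LEdge → ℝ)
    (hE : ∀ e ∈ E, e.1.1 ∈ V ∧ e.1.2 ∈ V)
    (hinj : Set.InjOn ω ↑E) (hconn : connL V E)
    (E1 E2 : Finset LEdge) (hunion : E1 ∪ E2 = E) (hdisj : Disjoint E1 E2)
    (hsep : ∀ e1 ∈ E1, ∀ e2 ∈ E2, ω e1 < ω e2)
    (T : Finset LEdge) (hTE : T ⊆ E) (hT : IsLTree V T) :
    eaL E T ω =
      eaL (E1.image (quotEdge (rep V (T ∩ E2))))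
          ((T ∩ E1).image (quotEdge (rep V (T ∩ E2)))) (ω ∘ decodeE)
        + eaL E2 (T ∩ E2) ω := by
  classical
  have hTV : ∀ f ∈ T, f.1.1 ∈ V ∧ f.1.2 ∈ V := fun f hf => hE f (hTE hf)
  have hfor : ∀ g ∈ T, ¬reachL (T.erase g) g.1.1 g.1.2 := fun g hg => tree_bridge hTV hT hg
  set F : Finset LEdge := T ∩ E2 with hF
  set ρ : ℕ → ℕ := rep V F with hρ
  set q : LEdge → LEdge := quotEdge ρ with hqdef
  set F1 : Finset LEdge := T ∩ E1 with hF1def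
  have hFT : F ⊆ T := by rw [hF]; exact Finset.inter_subset_left
  have hF1T : F1 ⊆ T := by rw [hF1def]; exact Finset.inter_subset_left
  have hdec : ∀ e : LEdge, decodeE (q e) = e := by
    intro e
    rw [hqdef]
    simp [quotEdge, decodeE, Nat.unpair_pair]
  have hqinj : Function.Injective q := Function.LeftInverse.injective hdec
  have hmin : ∀ (s t : Finset ℕ) (hs : s.Nonempty) (ht : t.Nonempty),
      s = t → s.min' hs = t.min' ht := by
    rintro s t hs ht rfl; rfl
  have hrepV : ∀ x ∈ V, ρ x ∈ V ∧ reachL F x (ρ x) := by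
    intro x hx
    have hm : ρ x ∈ V.filter fun y => reachL F x y := by
      rw [hρ]
      simp only [rep, dif_pos hx]
      exact Finset.min'_mem _ _
    simpa using hm
  have hrep_eq : ∀ x ∈ V, ∀ y ∈ V, reachL F x y → ρ x = ρ y := by
    intro x hx y hy hxy
    have hset : (V.filter fun z => reachL F x z) = V.filter fun z => reachL F y z := by
      ext z
      simp only [Finset.mem_filter, and_congr_right_iff]
      intro _
      exact ⟨fun h => reachL_trans (reachL_symm hxy) h, fun h => reachL_trans hxy h⟩
    rw [hρ]
    simp only [rep, dif_pos hx, dif_pos hy]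
    exact hmin _ _ _ _ hset
  have hrep_rev : ∀ x ∈ V, ∀ y ∈ V, ρ x = ρ y → reachL F x y := by
    intro x hx y hy hxy
    have h1 := (hrepV x hx).2
    have h2 := (hrepV y hy).2
    exact reachL_trans h1 (by rw [hxy]; exact reachL_symm h2)
  have hquot_walk : ∀ (S : Finset LEdge), S ⊆ T → ∀ x y, reachL S x y →
      reachL ((S ∩ E1).image q) (ρ x) (ρ y) := by
    intro S hS x y hxy
    induction hxy using Relation.ReflTransGen.head_induction_on with
    | refl => exact Relation.ReflTransGen.refl
    | head had hr ihh =>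
      rename_i z c
      obtain ⟨g, hg, hor⟩ := had
      have hgT : g ∈ T := hS hg
      have hgE : g ∈ E := hTE hgT
      obtain ⟨hg1V, hg2V⟩ := hTV g hgT
      rw [← hunion] at hgE
      rcases hor with h1 | h1
      · have h11 : g.1.1 = z := by rw [h1]
        have h12 : g.1.2 = c := by rw [h1]
        rcases Finset.mem_union.mp hgE with hg1 | hg2
        · refine Relation.ReflTransGen.head
            ⟨q g, Finset.mem_image_of_mem q (Finset.mem_inter.mpr ⟨hg, hg1⟩), Or.inl ?_⟩ ihh
          show (q g).1 = (ρ z, ρ c)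
          rw [hqdef]
          show (ρ g.1.1, ρ g.1.2) = (ρ z, ρ c)
          rw [h11, h12]
        · have hzc : ρ z = ρ c := by
            rw [← h11, ← h12]
            exact hrep_eq g.1.1 hg1V g.1.2 hg2V
              (reachL_of_mem (by rw [hF]; exact Finset.mem_inter.mpr ⟨hgT, hg2⟩))
          rw [hzc]; exact ihh
      · have h11 : g.1.1 = c := by rw [h1]
        have h12 : g.1.2 = z := by rw [h1]
        rcases Finset.mem_union.mp hgE with hg1 | hg2
        · refine Relation.ReflTransGen.head
            ⟨q g, Finset.mem_image_of_mem q (Finset.mem_inter.mpr ⟨hg, hg1⟩), Or.inr ?_⟩ ihh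
          show (q g).1 = (ρ c, ρ z)
          rw [hqdef]
          show (ρ g.1.1, ρ g.1.2) = (ρ c, ρ z)
          rw [h11, h12]
        · have hzc : ρ z = ρ c := by
            rw [← h11, ← h12]
            exact hrep_eq g.1.2 hg2V g.1.1 hg1V
              (reachL_symm (reachL_of_mem (by rw [hF]; exact Finset.mem_inter.mpr ⟨hgT, hg2⟩)))
          rw [hzc]; exact ihh
  have hlift : ∀ (W : Finset LEdge), W ⊆ F1 → ∀ u w, reachL (W.image q) u w →
      ∀ x ∈ V, ρ x = u → ∀ y ∈ V, ρ y = w → reachL (W ∪ F) x y := by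
    intro W hW u w huw
    induction huw using Relation.ReflTransGen.head_induction_on with
    | refl =>
      intro x hx hxu y hy hyw
      exact reachL_mono Finset.subset_union_right (hrep_rev x hx y hy (hxu.trans hyw.symm))
    | head had hr ihh =>
      rename_i z c
      intro x hx hxz y hy hyw
      obtain ⟨g, hg, hor⟩ := had
      obtain ⟨f, hfW, rfl⟩ := Finset.mem_image.mp hg
      have hfT : f ∈ T := hF1T (hW hfW)
      obtain ⟨hf1V, hf2V⟩ := hTV f hfT
      rcases hor with h1 | h1
      · have h11 : ρ f.1.1 = z := by rw [show (ρ f.1.1) = (q f).1.1 from by rw [hqdef]; rfl, h1]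
        have h12 : ρ f.1.2 = c := by rw [show (ρ f.1.2) = (q f).1.2 from by rw [hqdef]; rfl, h1]
        have hx1 : reachL F x f.1.1 := hrep_rev x hx f.1.1 hf1V (by rw [hxz, ← h11])
        refine reachL_trans (reachL_mono Finset.subset_union_right hx1) ?_
        refine Relation.ReflTransGen.head ⟨f, Finset.mem_union_left _ hfW, Or.inl rfl⟩ ?_
        exact ihh f.1.2 hf2V h12 y hy hyw
      · have h11 : ρ f.1.1 = c := by rw [show (ρ f.1.1) = (q f).1.1 from by rw [hqdef]; rfl, h1]
        have h12 : ρ f.1.2 = z := by rw [show (ρ f.1.2) = (q f).1.2 from by rw [hqdef]; rfl, h1]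
        have hx1 : reachL F x f.1.2 := hrep_rev x hx f.1.2 hf2V (by rw [hxz, ← h12])
        refine reachL_trans (reachL_mono Finset.subset_union_right hx1) ?_
        refine Relation.ReflTransGen.head ⟨f, Finset.mem_union_left _ hfW, Or.inr rfl⟩ ?_
        exact ihh f.1.1 hf1V h11 y hy hyw
  have hE1equiv : ∀ e ∈ E1,
      (extActiveL T ω e ↔ extActiveL (F1.image q) (ω ∘ decodeE) (q e)) := by
    intro e he1
    have heE : e ∈ E := by rw [← hunion]; exact Finset.mem_union_left _ he1
    obtain ⟨haV, hbV⟩ := hE e heE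
    unfold extActiveL
    constructor
    · rintro ⟨heT, -, hwt⟩
      refine ⟨?_, ?_, ?_⟩
      · intro hmem
        obtain ⟨f, hf, hfe⟩ := Finset.mem_image.mp hmem
        rw [hqinj hfe] at hf
        rw [hF1def] at hf
        exact heT (Finset.mem_inter.mp hf).1
      · have hw := hquot_walk T (Finset.Subset.refl T) e.1.1 e.1.2 (hT.1 e.1.1 haV e.1.2 hbV)
        rw [← hF1def] at hw
        exact hw
      · intro g hg hng
        obtain ⟨e'', he''F1, rfl⟩ := Finset.mem_image.mp hg
        have he''T : e'' ∈ T := hF1T he''F1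
        have hcut : ¬reachL (T.erase e'') e.1.1 e.1.2 := by
          intro hr
          apply hng
          have hw := hquot_walk (T.erase e'') (Finset.erase_subset _ _) e.1.1 e.1.2 hr
          refine reachL_mono ?_ hw
          have hset : T.erase e'' ∩ E1 = F1.erase e'' := by
            ext z
            simp only [Finset.mem_inter, Finset.mem_erase, hF1def]
            tauto
          rw [hset, Finset.image_erase hqinj]
        simp only [Function.comp_apply, hdec]
        exact hwt e'' he''T hcut
    · rintro ⟨hqT, -, hwt⟩
      have heT : e ∉ T := fun h =>
        hqT (Finset.mem_image_of_mem q (by rw [hF1def]; exact Finset.mem_inter.mpr ⟨h, he1⟩))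
      refine ⟨heT, hT.1 e.1.1 haV e.1.2 hbV, ?_⟩
      intro e' he'T hne'
      have he'E : e' ∈ E := hTE he'T
      rw [← hunion] at he'E
      rcases Finset.mem_union.mp he'E with h1 | h2
      · have he'F1 : e' ∈ F1 := by rw [hF1def]; exact Finset.mem_inter.mpr ⟨he'T, h1⟩
        have hcutq : ¬reachL ((F1.image q).erase (q e')) (q e).1.1 (q e).1.2 := by
          intro hrq
          apply hne'
          rw [← Finset.image_erase hqinj] at hrq
          have hl := hlift (F1.erase e') (Finset.erase_subset _ _) _ _ hrq
            e.1.1 haV rfl e.1.2 hbV rfl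
          refine reachL_mono ?_ hl
          intro z hz
          rcases Finset.mem_union.mp hz with hz | hz
          · obtain ⟨hzne, hzF1⟩ := Finset.mem_erase.mp hz
            exact Finset.mem_erase.mpr ⟨hzne, hF1T hzF1⟩
          · refine Finset.mem_erase.mpr ⟨?_, hFT hz⟩
            intro hze
            rw [hze, hF] at hz
            exact (Finset.disjoint_left.mp hdisj h1) (Finset.mem_inter.mp hz).2
        have hlt := hwt (q e') (Finset.mem_image_of_mem q he'F1) hcutq
        simpa only [Function.comp_apply, hdec] using hlt
      · exact hsep e he1 e' h2
  have hE2equiv : ∀ e ∈ E2, (extActiveL T ω e ↔ extActiveL F ω e) := by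
    intro e he2
    have heE : e ∈ E := by rw [← hunion]; exact Finset.mem_union_right _ he2
    obtain ⟨haV, hbV⟩ := hE e heE
    unfold extActiveL
    constructor
    · rintro ⟨heT, -, hwt⟩
      have hcut : ∀ e' ∈ T, ¬reachL (T.erase e') e.1.1 e.1.2 → e' ∈ F := by
        intro e' he' hne'
        have he'E : e' ∈ E := hTE he'
        rw [← hunion] at he'E
        rcases Finset.mem_union.mp he'E with h1 | h2
        · exact absurd (hsep e' h1 e he2) (not_lt.mpr (hwt e' he' hne').le)
        · rw [hF]; exact Finset.mem_inter.mpr ⟨he', h2⟩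
      have hreachF : reachL F e.1.1 e.1.2 :=
        reach_sub_of_cut T.card T F e.1.1 e.1.2 le_rfl hFT hfor
          (hT.1 e.1.1 haV e.1.2 hbV) hcut
      refine ⟨fun h => heT (hFT h), hreachF, ?_⟩
      intro e' he'F hne'
      apply hwt e' (hFT he'F)
      intro hr
      apply hne'
      refine reach_sub_of_cut (T.erase e').card (T.erase e') (F.erase e') e.1.1 e.1.2 le_rfl
        (Finset.erase_subset_erase _ hFT) ?_ hr ?_
      · intro g hg hre
        exact hfor g (Finset.mem_of_mem_erase hg)
          (reachL_mono (Finset.erase_subset_erase g (Finset.erase_subset _ _)) hre)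
      · intro g hg hng
        refine Finset.mem_erase.mpr ⟨(Finset.mem_erase.mp hg).1, ?_⟩
        apply hcut g (Finset.mem_of_mem_erase hg)
        intro hr2
        exact hng (forest_erase_pres hfor (hFT he'F) hr hr2)
    · rintro ⟨heF, hreachF, hwt⟩
      refine ⟨fun h => heF (by rw [hF]; exact Finset.mem_inter.mpr ⟨h, he2⟩),
        hT.1 e.1.1 haV e.1.2 hbV, ?_⟩
      intro e' he'T hne'
      have he'F : e' ∈ F := by
        by_contra hcon
        apply hne'
        refine reachL_mono ?_ hreachF
        intro z hz
        exact Finset.mem_erase.mpr ⟨fun h => hcon (h ▸ hz), hFT hz⟩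
      exact hwt e' he'F fun hr => hne' (reachL_mono (Finset.erase_subset_erase _ hFT) hr)
  have himgfilt : ∀ (s : Finset LEdge) (p : LEdge → Prop),
      (s.image q).filter p = (s.filter fun e => p (q e)).image q := by
    intro s p
    ext z
    simp only [Finset.mem_filter, Finset.mem_image]
    constructor
    · rintro ⟨⟨f, hf, rfl⟩, hp⟩
      exact ⟨f, ⟨hf, hp⟩, rfl⟩
    · rintro ⟨f, ⟨hf, hp⟩, rfl⟩
      exact ⟨⟨f, hf, rfl⟩, hp⟩
  unfold eaL
  rw [← hunion, Finset.filter_union,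
    Finset.card_union_of_disjoint (Finset.disjoint_filter_filter hdisj)]
  congr 1
  · rw [himgfilt, Finset.card_image_of_injective _ hqinj]
    congr 1
    ext z
    simp only [Finset.mem_filter]
    exact and_congr_right fun hz => hE1equiv z hz
  · congr 1
    ext z
    simp only [Finset.mem_filter]
    exact and_congr_right fun hz => hE2equiv z hz


end
end

section
/- Let H be a graph with U ⊆ V(H), p = (p_1, p_2) an ordered partition of |U|, and p' = (p_2, p_1). Then T ↦ T* is a bijection from the union over all complete tiered graphs Q on U with tier sizes p of the spanning trees of H ∪ Q, to the union over all complete tiered graphs Q' on U with tier sizes p' of the spanning trees of H ∪ Q', where T* = E_0 ∪ F' with E_0 = E(T) ∩ E(H) and F' the dual of the tiered forest F = (U, E(T) \ E_0). -/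
open Finset

attribute [local instance 10] Classical.propDecidable

noncomputable section

namespace Stmt12Aux

lemma adjP_symm {E : Finset PEdge} {u v : ℕ} (h : adjP E u v) : adjP E v u := h.elim .inr .inl

lemma reachP_symm {E : Finset PEdge} {u v : ℕ} (h : reachP E u v) : reachP E v u := by
  induction h with
  | refl => exact .refl
  | tail _ h2 ih => exact Relation.ReflTransGen.trans (Relation.ReflTransGen.single (adjP_symm h2)) ih

lemma comp_eq_of_reach {V : Finset ℕ} {E : Finset PEdge} {x y : ℕ} (h : reachP E x y) :
    comp V E x = comp V E y := by
  ext z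
  simp only [comp, mem_filter, and_congr_right_iff]
  intro _
  exact ⟨fun hz => (reachP_symm h).trans hz, fun hz => h.trans hz⟩

lemma mem_comp {V : Finset ℕ} {E : Finset PEdge} {x y : ℕ} :
    y ∈ comp V E x ↔ y ∈ V ∧ reachP E x y := mem_filter

lemma flipMap_mem {V : Finset ℕ} {x : ℕ} (hx : x ∈ V) : flipMap V x ∈ V := by
  rw [flipMap, dif_pos hx]
  exact ((V.orderIsoOfFin rfl) _).2

lemma flipMap_not_mem {V : Finset ℕ} {x : ℕ} (hx : x ∉ V) : flipMap V x = x := dif_neg hx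

lemma flipMap_eq {V : Finset ℕ} {x : ℕ} (hx : x ∈ V) :
    flipMap V x = ((V.orderIsoOfFin rfl)
      ⟨V.card - 1 - ((V.orderIsoOfFin rfl).symm ⟨x, hx⟩).1, by
        have h := ((V.orderIsoOfFin rfl).symm ⟨x, hx⟩).isLt; omega⟩).1 := dif_pos hx

lemma flipMap_coe (V : Finset ℕ) (j : Fin V.card) :
    flipMap V ((V.orderIsoOfFin rfl) j).1
      = ((V.orderIsoOfFin rfl) ⟨V.card - 1 - j.1, by have := j.isLt; omega⟩).1 := by
  set σ := V.orderIsoOfFin rfl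
  have hy : (σ j).1 ∈ V := (σ j).2
  rw [flipMap_eq hy]
  congr 2
  have : (⟨(σ j).1, hy⟩ : {a // a ∈ V}) = σ j := Subtype.ext rfl
  rw [Fin.mk.injEq, this, OrderIso.symm_apply_apply]

lemma flipMap_flipMap (V : Finset ℕ) (x : ℕ) : flipMap V (flipMap V x) = x := by
  by_cases hx : x ∈ V
  · set σ := V.orderIsoOfFin rfl
    obtain ⟨j, hj⟩ : ∃ j : Fin V.card, (σ j).1 = x := ⟨σ.symm ⟨x, hx⟩, by rw [OrderIso.apply_symm_apply]⟩
    subst hj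
    rw [flipMap_coe, flipMap_coe]
    congr 1
    exact congrArg σ (Fin.ext (by have := j.isLt; simp; omega))
  · rw [flipMap_not_mem hx, flipMap_not_mem hx]

lemma flipMap_lt {V : Finset ℕ} {x y : ℕ} (hx : x ∈ V) (hy : y ∈ V) (hxy : x < y) :
    flipMap V y < flipMap V x := by
  set σ := V.orderIsoOfFin rfl
  obtain ⟨i, hi⟩ : ∃ i : Fin V.card, (σ i).1 = x := ⟨σ.symm ⟨x, hx⟩, by rw [OrderIso.apply_symm_apply]⟩
  obtain ⟨j, hj⟩ : ∃ j : Fin V.card, (σ j).1 = y := ⟨σ.symm ⟨y, hy⟩, by rw [OrderIso.apply_symm_apply]⟩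
  subst hi hj
  rw [flipMap_coe, flipMap_coe]
  have hij : i < j := by
    by_contra h
    have : j ≤ i := not_lt.mp h
    have := σ.monotone this
    exact absurd hxy (not_lt.mpr this)
  have : (⟨V.card - 1 - j.1, by have := j.isLt; omega⟩ : Fin V.card)
      < ⟨V.card - 1 - i.1, by have := i.isLt; omega⟩ := by
    simp only [Fin.mk_lt_mk]
    have := j.isLt
    omega
  exact σ.strictMono this


/-- the global componentwise flip. -/
def flp (V : Finset ℕ) (E : Finset PEdge) (x : ℕ) : ℕ := flipMap (comp V E x) x

lemma flp_not_mem {V : Finset ℕ} {E : Finset PEdge} {x : ℕ} (hx : x ∉ V) : flp V E x = x := by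
  apply flipMap_not_mem
  intro h
  exact hx (mem_comp.mp h).1

lemma mem_comp_self {V : Finset ℕ} {E : Finset PEdge} {x : ℕ} (hx : x ∈ V) :
    x ∈ comp V E x := mem_comp.mpr ⟨hx, Relation.ReflTransGen.refl⟩

lemma reach_flp (V : Finset ℕ) (E : Finset PEdge) (x : ℕ) : reachP E x (flp V E x) := by
  by_cases hx : x ∈ V
  · have : flp V E x ∈ comp V E x := flipMap_mem (mem_comp_self hx)
    exact (mem_comp.mp this).2
  · rw [flp_not_mem hx]
    exact Relation.ReflTransGen.refl

lemma flp_mem {V : Finset ℕ} {E : Finset PEdge} {x : ℕ} (hx : x ∈ V) : flp V E x ∈ V :=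
  (mem_comp.mp (flipMap_mem (mem_comp_self hx))).1

lemma comp_flp (V : Finset ℕ) (E : Finset PEdge) (x : ℕ) :
    comp V E (flp V E x) = comp V E x := (comp_eq_of_reach (reach_flp V E x)).symm

lemma flp_flp (V : Finset ℕ) (E : Finset PEdge) (x : ℕ) : flp V E (flp V E x) = x := by
  rw [flp, comp_flp]
  exact flipMap_flipMap _ _

lemma flp_mem_iff {V : Finset ℕ} {E : Finset PEdge} {x : ℕ} : flp V E x ∈ V ↔ x ∈ V := by
  constructor
  · intro h
    by_contra hx
    rw [flp_not_mem hx] at h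
    exact hx h
  · exact flp_mem

/-- the edge flip. -/
def flpE (V : Finset ℕ) (E : Finset PEdge) (e : PEdge) : PEdge := (flp V E e.2, flp V E e.1)

lemma flpE_flpE (V : Finset ℕ) (E : Finset PEdge) (e : PEdge) :
    flpE V E (flpE V E e) = e := by
  simp [flpE, flp_flp]

lemma flpE_inj (V : Finset ℕ) (E : Finset PEdge) : Function.Injective (flpE V E) :=
  Function.Involutive.injective (flpE_flpE V E)

lemma cdualE_eq (V : Finset ℕ) (E : Finset PEdge) (t : ℕ → ℕ) :
    (cdual ⟨V, E, t⟩).E = E.image (flpE V E) := by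
  apply Finset.image_congr
  intro e he
  have hcomp : comp V E e.1 = comp V E e.2 :=
    comp_eq_of_reach (Relation.ReflTransGen.single (Or.inl he))
  simp only [flpE, flp, hcomp]

lemma cdualt_eq (V : Finset ℕ) (E : Finset PEdge) (t : ℕ → ℕ) (x : ℕ) :
    (cdual ⟨V, E, t⟩).t x = if x ∈ V then 3 - t (flp V E x) else t x := rfl

lemma adjP_cdual (V : Finset ℕ) (E : Finset PEdge) (u v : ℕ) :
    adjP (E.image (flpE V E)) u v ↔ adjP E (flp V E u) (flp V E v) := by
  constructor
  · rintro (h | h)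
    · obtain ⟨e, he, hfe⟩ := Finset.mem_image.mp h
      have he' : e = flpE V E (u, v) := by rw [← hfe, flpE_flpE]
      right
      rw [he'] at he
      exact he
    · obtain ⟨e, he, hfe⟩ := Finset.mem_image.mp h
      have he' : e = flpE V E (v, u) := by rw [← hfe, flpE_flpE]
      left
      rw [he'] at he
      exact he
  · rintro (h | h)
    · right
      refine Finset.mem_image.mpr ⟨(flp V E u, flp V E v), h, ?_⟩
      simp [flpE, flp_flp]
    · left
      refine Finset.mem_image.mpr ⟨(flp V E v, flp V E u), h, ?_⟩
      simp [flpE, flp_flp]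


lemma reach_image_of_reach {V : Finset ℕ} {E : Finset PEdge} {x y : ℕ}
    (h : reachP E x y) : reachP (E.image (flpE V E)) (flp V E x) (flp V E y) := by
  induction h with
  | refl => exact Relation.ReflTransGen.refl
  | tail _ h2 ih =>
      exact ih.tail ((adjP_cdual V E _ _).mpr (by rwa [flp_flp, flp_flp]))

lemma reach_flp_image (V : Finset ℕ) (E : Finset PEdge) (x : ℕ) :
    reachP (E.image (flpE V E)) x (flp V E x) := by
  have := reach_image_of_reach (V := V) (reach_flp V E x)
  rw [flp_flp] at this
  exact reachP_symm this

lemma reachP_cdual (V : Finset ℕ) (E : Finset PEdge) (u v : ℕ) :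
    reachP (E.image (flpE V E)) u v ↔ reachP E u v := by
  constructor
  · intro h
    have h2 : reachP E (flp V E u) (flp V E v) := by
      induction h with
      | refl => exact Relation.ReflTransGen.refl
      | tail _ h2 ih => exact ih.tail ((adjP_cdual V E _ _).mp h2)
    exact ((reach_flp V E u).trans h2).trans (reachP_symm (reach_flp V E v))
  · intro h
    exact ((reach_flp_image V E u).trans (reach_image_of_reach h)).trans
      (reachP_symm (reach_flp_image V E v))

lemma comp_cdual (V : Finset ℕ) (E : Finset PEdge) (x : ℕ) :
    comp V (E.image (flpE V E)) x = comp V E x := by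
  ext y
  simp only [mem_comp]
  rw [reachP_cdual]

lemma flp_cdual (V : Finset ℕ) (E : Finset PEdge) (x : ℕ) :
    flp V (E.image (flpE V E)) x = flp V E x := by
  rw [flp, comp_cdual]
  rfl

lemma flpE_cdual (V : Finset ℕ) (E : Finset PEdge) (e : PEdge) :
    flpE V (E.image (flpE V E)) e = flpE V E e := by
  simp [flpE, flp_cdual]

lemma card_cdualE (V : Finset ℕ) (E : Finset PEdge) :
    (E.image (flpE V E)).card = E.card :=
  Finset.card_image_of_injective _ (flpE_inj V E)

lemma cdual_cdual_E (V : Finset ℕ) (E : Finset PEdge) :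
    (E.image (flpE V E)).image (flpE V (E.image (flpE V E))) = E := by
  rw [Finset.image_image]
  have : flpE V (E.image (flpE V E)) ∘ flpE V E = id := by
    funext e
    simp [flpE_cdual, flpE_flpE]
  rw [this, Finset.image_id]

lemma flp_lt {V : Finset ℕ} {E : Finset PEdge} {e : PEdge} (he : e ∈ E)
    (h1 : e.1 ∈ V) (h2 : e.2 ∈ V) (hlt : e.1 < e.2) : flp V E e.2 < flp V E e.1 := by
  have hreach : reachP E e.1 e.2 := Relation.ReflTransGen.single (Or.inl he)
  have hc : comp V E e.1 = comp V E e.2 := comp_eq_of_reach hreach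
  rw [flp, flp, ← hc]
  exact flipMap_lt (mem_comp_self h1) (hc ▸ mem_comp_self h2) hlt

lemma reachL_mono {A B : Finset LEdge} (h : A ⊆ B) {x y : ℕ} (hr : reachL A x y) :
    reachL B x y := by
  induction hr with
  | refl => exact Relation.ReflTransGen.refl
  | tail _ h2 ih =>
      obtain ⟨e, he, h3⟩ := h2
      exact ih.tail ⟨e, h he, h3⟩

lemma reachL_of_reachP {E : Finset PEdge} {x y : ℕ} (h : reachP E x y) :
    reachL (E.image fun p => (p, 0)) x y := by
  induction h with
  | refl => exact Relation.ReflTransGen.refl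
  | tail _ h2 ih =>
      refine ih.tail ?_
      rcases h2 with h2 | h2
      · exact ⟨(_, 0), Finset.mem_image_of_mem _ h2, Or.inl rfl⟩
      · exact ⟨(_, 0), Finset.mem_image_of_mem _ h2, Or.inr rfl⟩


lemma dualTree_eq (U S : Finset ℕ) (T : Finset LEdge) :
    dualTree U (S, T) =
      (U.filter fun v => flp U ((T.filter fun e => e.2 = 0).image Prod.fst) v ∉ S,
       (T.filter fun e => e.2 ≠ 0) ∪
         (((T.filter fun e => e.2 = 0).image Prod.fst).image
           (flpE U ((T.filter fun e => e.2 = 0).image Prod.fst))).image fun p => (p, 0)) := by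
  refine Prod.ext ?_ ?_
  · show (U.filter fun v =>
      (cdual ⟨U, (T.filter fun e => e.2 = 0).image Prod.fst,
        fun w => if w ∈ S then 1 else 2⟩).t v = 1) = _
    ext v
    simp only [Finset.mem_filter]
    constructor
    · rintro ⟨hv, hP⟩
      refine ⟨hv, ?_⟩
      rw [cdualt_eq, if_pos hv] at hP
      intro hmem
      rw [if_pos hmem] at hP
      omega
    · rintro ⟨hv, hns⟩
      refine ⟨hv, ?_⟩
      rw [cdualt_eq, if_pos hv, if_neg hns]
  · show (T.filter fun e => e.2 ≠ 0) ∪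
      (cdual ⟨U, (T.filter fun e => e.2 = 0).image Prod.fst,
        fun w => if w ∈ S then 1 else 2⟩).E.image (fun p => (p, 0)) = _
    rw [cdualE_eq]

lemma dual_mem (VH : Finset ℕ) (EH : Finset LEdge)
    (hEH : ∀ e ∈ EH, e.1.1 ∈ VH ∧ e.1.2 ∈ VH ∧ e.2 ≠ 0)
    (U : Finset ℕ) (p1 p2 : ℕ) (hp : p1 + p2 = U.card)
    (S : Finset ℕ) (T : Finset LEdge) (hS : S ⊆ U) (hcard : S.card = p1)
    (hT : T ⊆ qE U EH S) (htree : IsLTree VH T) :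
    (dualTree U (S, T)).1 ⊆ U ∧ (dualTree U (S, T)).1.card = p2 ∧
      (dualTree U (S, T)).2 ⊆ qE U EH (dualTree U (S, T)).1 ∧
      IsLTree VH (dualTree U (S, T)).2 := by
  rw [dualTree_eq]
  set E : Finset PEdge := (T.filter fun e => e.2 = 0).image Prod.fst with hEdef
  set E' : Finset PEdge := E.image (flpE U E) with hE'def
  set S' : Finset ℕ := U.filter fun v => flp U E v ∉ S with hS'def
  set T' : Finset LEdge := (T.filter fun e => e.2 ≠ 0) ∪ E'.image fun p => (p, 0) with hT'def
  -- basic edge facts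
  have hE : ∀ p ∈ E, p.1 ∈ S ∧ (p.2 ∈ U ∧ p.2 ∉ S) ∧ p.1 < p.2 := by
    intro p hp'
    obtain ⟨e, he, hfe⟩ := Finset.mem_image.mp hp'
    obtain ⟨heT, he0⟩ := Finset.mem_filter.mp he
    rcases Finset.mem_union.mp (hT heT) with h | h
    · exact absurd he0 (hEH e h).2.2
    · obtain ⟨q, hq, hqe⟩ := Finset.mem_image.mp h
      obtain ⟨hq1, hq2⟩ := Finset.mem_filter.mp hq
      obtain ⟨ha, hb⟩ := Finset.mem_product.mp hq1
      have hpq : p = q := by rw [← hfe, ← hqe]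
      subst hpq
      obtain ⟨hb1, hb2⟩ := Finset.mem_sdiff.mp hb
      exact ⟨ha, ⟨hb1, hb2⟩, hq2⟩
  have hflpinv : Function.Involutive (flp U E) := fun x => flp_flp U E x
  -- cardinality of S'
  have hS'img : S' = (U \ S).image (flp U E) := by
    ext v
    simp only [hS'def, Finset.mem_filter, Finset.mem_image, Finset.mem_sdiff]
    constructor
    · rintro ⟨hv, hns⟩
      exact ⟨flp U E v, ⟨flp_mem hv, hns⟩, flp_flp U E v⟩
    · rintro ⟨w, ⟨hwU, hwS⟩, rfl⟩
      exact ⟨flp_mem hwU, by rwa [flp_flp]⟩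
  have hcardS' : S'.card = p2 := by
    rw [hS'img, Finset.card_image_of_injective _ hflpinv.injective,
      Finset.card_sdiff_of_subset hS, hcard]
    omega
  -- the dual forest edges land in the dual complete tiered graph
  have hE' : ∀ f ∈ E', f ∈ ctE2 S' (U \ S') := by
    intro f hf
    obtain ⟨e, he, hfe⟩ := Finset.mem_image.mp hf
    obtain ⟨h1, ⟨h2U, h2S⟩, hlt⟩ := hE e he
    have h1U : e.1 ∈ U := hS h1
    rw [← hfe]
    show (flp U E e.2, flp U E e.1) ∈ ctE2 S' (U \ S')
    refine Finset.mem_filter.mpr ⟨Finset.mem_product.mpr ⟨?_, ?_⟩, ?_⟩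
    · exact Finset.mem_filter.mpr ⟨flp_mem h2U, by rw [flp_flp]; exact fun h => h2S h⟩
    · refine Finset.mem_sdiff.mpr ⟨flp_mem h1U, ?_⟩
      intro hmem
      have h3 := (Finset.mem_filter.mp hmem).2
      rw [flp_flp] at h3
      exact h3 h1
    · exact flp_lt he h1U h2U hlt
  have hsub : T' ⊆ qE U EH S' := by
    intro f hf
    rcases Finset.mem_union.mp hf with hf | hf
    · obtain ⟨hfT, hf0⟩ := Finset.mem_filter.mp hf
      rcases Finset.mem_union.mp (hT hfT) with h | h
      · exact Finset.mem_union_left _ h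
      · obtain ⟨q, hq1, hqe⟩ := Finset.mem_image.mp h
        exact absurd (by rw [← hqe] : f.2 = 0) hf0
    · obtain ⟨p, hp', rfl⟩ := Finset.mem_image.mp hf
      exact Finset.mem_union_right _ (Finset.mem_image_of_mem _ (hE' p hp'))
  -- cardinality of T'
  have hdisj : Disjoint (T.filter fun e => e.2 ≠ 0) (E'.image fun p => (p, 0)) := by
    rw [Finset.disjoint_left]
    intro f hf1 hf2
    obtain ⟨_, h0⟩ := Finset.mem_filter.mp hf1
    obtain ⟨p, _, hpe⟩ := Finset.mem_image.mp hf2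
    exact h0 (by rw [← hpe])
  have hQE : E.card = (T.filter fun e => e.2 = 0).card := by
    rw [hEdef]
    apply Finset.card_image_of_injOn
    intro a ha b hb hab
    have ha0 := (Finset.mem_filter.mp ha).2
    have hb0 := (Finset.mem_filter.mp hb).2
    exact Prod.ext hab (ha0.trans hb0.symm)
  have hpair : Function.Injective (fun p : PEdge => ((p, 0) : LEdge)) := by
    intro a b h
    exact (Prod.ext_iff.mp h).1
  have hsplit : (T.filter fun e => e.2 ≠ 0).card + (T.filter fun e => e.2 = 0).card
      = T.card := by
    have h := Finset.card_filter_add_card_filter_not (s := T)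
      (p := fun e : LEdge => e.2 ≠ 0)
    have h2 : T.filter (fun e => ¬ e.2 ≠ 0) = T.filter (fun e => e.2 = 0) := by
      ext e
      simp
    rw [h2] at h
    exact h
  have hcardT' : T'.card = T.card := by
    rw [hT'def, Finset.card_union_of_disjoint hdisj,
      Finset.card_image_of_injective _ hpair, hE'def, card_cdualE, hQE]
    exact hsplit
  -- connectivity of T'
  have hstep : ∀ b c, adjL T b c → reachL T' b c := by
    intro b c h2
    obtain ⟨e, heT, hcase⟩ := h2
    by_cases h0 : e.2 = 0
    · have heE : e.1 ∈ E := Finset.mem_image_of_mem _ (Finset.mem_filter.mpr ⟨heT, h0⟩)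
      have hPE : reachP E b c := by
        rcases hcase with h | h
        · exact Relation.ReflTransGen.single (Or.inl (h ▸ heE))
        · exact Relation.ReflTransGen.single (Or.inr (h ▸ heE))
      have hPE' : reachP E' b c := (reachP_cdual U E b c).mpr hPE
      exact reachL_mono Finset.subset_union_right (reachL_of_reachP hPE')
    · exact Relation.ReflTransGen.single
        ⟨e, Finset.mem_union_left _ (Finset.mem_filter.mpr ⟨heT, h0⟩), hcase⟩
  have hreach : ∀ u v, reachL T u v → reachL T' u v := by
    intro u v h
    induction h with
    | refl => exact Relation.ReflTransGen.refl
    | tail _ h2 ih => exact ih.trans (hstep _ _ h2)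
  exact ⟨Finset.filter_subset _ _, hcardS', hsub,
    fun u hu v hv => hreach u v (htree.1 u hu v hv),
    by rw [hcardT']; exact htree.2⟩


lemma dual_dual (VH : Finset ℕ) (EH : Finset LEdge)
    (hEH : ∀ e ∈ EH, e.1.1 ∈ VH ∧ e.1.2 ∈ VH ∧ e.2 ≠ 0)
    (U S : Finset ℕ) (T : Finset LEdge) (hS : S ⊆ U) (hT : T ⊆ qE U EH S) :
    dualTree U (dualTree U (S, T)) = (S, T) := by
  rw [dualTree_eq U S T]
  set E : Finset PEdge := (T.filter fun e => e.2 = 0).image Prod.fst with hEdef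
  set E' : Finset PEdge := E.image (flpE U E) with hE'def
  set S' : Finset ℕ := U.filter fun v => flp U E v ∉ S with hS'def
  set T' : Finset LEdge := (T.filter fun e => e.2 ≠ 0) ∪ E'.image fun p => (p, 0) with hT'def
  rw [dualTree_eq U S' T']
  -- labels of H-edges are nonzero
  have hlab : ∀ e ∈ T, e.2 = 0 → e.1 ∈ E := by
    intro e he h0
    exact Finset.mem_image_of_mem _ (Finset.mem_filter.mpr ⟨he, h0⟩)
  have hQeq : T.filter (fun e => e.2 = 0) = E.image fun p => (p, 0) := by
    ext f
    constructor
    · intro hf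
      obtain ⟨hfT, hf0⟩ := Finset.mem_filter.mp hf
      refine Finset.mem_image.mpr ⟨f.1, hlab f hfT hf0, ?_⟩
      exact Prod.ext rfl hf0.symm
    · intro hf
      obtain ⟨p, hpE, hpf⟩ := Finset.mem_image.mp hf
      obtain ⟨e, he, hfe⟩ := Finset.mem_image.mp hpE
      obtain ⟨heT, he0⟩ := Finset.mem_filter.mp he
      have : f = e := by rw [← hpf, ← hfe]; exact Prod.ext rfl he0.symm
      rw [this]
      exact Finset.mem_filter.mpr ⟨heT, he0⟩
  -- the label-0 part of T'
  have hT'0 : T'.filter (fun e => e.2 = 0) = E'.image fun p => (p, 0) := by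
    ext f
    simp only [hT'def, Finset.mem_filter, Finset.mem_union, Finset.mem_image]
    constructor
    · rintro ⟨hf | ⟨p, hp', hpf⟩, hf0⟩
      · exact absurd hf0 hf.2
      · exact ⟨p, hp', hpf⟩
    · rintro ⟨p, hp', rfl⟩
      exact ⟨Or.inr ⟨p, hp', rfl⟩, rfl⟩
  have hE2 : (T'.filter fun e => e.2 = 0).image Prod.fst = E' := by
    rw [hT'0, Finset.image_image]
    have : (Prod.fst ∘ fun p : PEdge => ((p, 0) : LEdge)) = id := rfl
    rw [this, Finset.image_id]
  -- nonzero part of T'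
  have hT'ne : T'.filter (fun e => e.2 ≠ 0) = T.filter fun e => e.2 ≠ 0 := by
    ext f
    simp only [hT'def, Finset.mem_filter, Finset.mem_union, Finset.mem_image]
    constructor
    · rintro ⟨hf | ⟨p, hp', hpf⟩, hf0⟩
      · exact hf
      · exact absurd (by rw [← hpf] : f.2 = 0) hf0
    · rintro ⟨hfT, hf0⟩
      exact ⟨Or.inl ⟨hfT, hf0⟩, hf0⟩
  rw [hE2, hT'ne]
  refine Prod.ext ?_ ?_
  · -- first component: back to S
    show U.filter (fun v => flp U E' v ∉ S') = S
    ext v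
    simp only [Finset.mem_filter]
    constructor
    · rintro ⟨hv, hns⟩
      by_contra hvS
      apply hns
      rw [hE'def, flp_cdual]
      exact Finset.mem_filter.mpr ⟨flp_mem hv, by rw [flp_flp]; exact hvS⟩
    · intro hvS
      have hv : v ∈ U := hS hvS
      refine ⟨hv, ?_⟩
      rw [hE'def, flp_cdual]
      intro hmem
      have h3 := (Finset.mem_filter.mp hmem).2
      rw [flp_flp] at h3
      exact h3 hvS
  · -- second component: back to T
    show (T.filter fun e => e.2 ≠ 0) ∪ (E'.image (flpE U E')).image (fun p => (p, 0)) = T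
    rw [hE'def, cdual_cdual_E, ← hQeq]
    ext f
    simp only [Finset.mem_union, Finset.mem_filter]
    constructor
    · rintro (⟨hf, _⟩ | ⟨hf, _⟩) <;> exact hf
    · intro hf
      by_cases h0 : f.2 = 0
      · exact Or.inr ⟨hf, h0⟩
      · exact Or.inl ⟨hf, h0⟩

end Stmt12Aux

open Stmt12Aux

/-- `T ↦ T*` is a bijection from the quasi-tiered spanning trees of the
graphs `H ∪ Q` (`Q` complete tiered on `U` with tier sizes `(p1,p2)`) to those of the
graphs `H ∪ Q'` (tier sizes `(p2,p1)`).  A quasi-tiered spanning tree is a pair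
`(S, T)` of the tier-1 set and the (labelled) edge set. -/
theorem stmt12 (VH : Finset ℕ) (EH : Finset LEdge)
    (hEH : ∀ e ∈ EH, e.1.1 ∈ VH ∧ e.1.2 ∈ VH ∧ e.2 ≠ 0)
    (U : Finset ℕ) (hUV : U ⊆ VH) (hUne : U.Nonempty) (hpos : ∀ v ∈ U, 0 < v)
    (p1 p2 : ℕ) (hp : p1 + p2 = U.card) :
    Set.BijOn (dualTree U)
      {ST : Finset ℕ × Finset LEdge |
        ST.1 ⊆ U ∧ ST.1.card = p1 ∧ ST.2 ⊆ qE U EH ST.1 ∧ IsLTree VH ST.2}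
      {ST : Finset ℕ × Finset LEdge |
        ST.1 ⊆ U ∧ ST.1.card = p2 ∧ ST.2 ⊆ qE U EH ST.1 ∧ IsLTree VH ST.2} := by
  have hp' : p2 + p1 = U.card := by omega
  have h1 : Set.MapsTo (dualTree U)
      {ST : Finset ℕ × Finset LEdge |
        ST.1 ⊆ U ∧ ST.1.card = p1 ∧ ST.2 ⊆ qE U EH ST.1 ∧ IsLTree VH ST.2}
      {ST : Finset ℕ × Finset LEdge |
        ST.1 ⊆ U ∧ ST.1.card = p2 ∧ ST.2 ⊆ qE U EH ST.1 ∧ IsLTree VH ST.2} := by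
    rintro ⟨S, T⟩ ⟨hS, hc, hT, ht⟩
    exact dual_mem VH EH hEH U p1 p2 hp S T hS hc hT ht
  have h2 : Set.MapsTo (dualTree U)
      {ST : Finset ℕ × Finset LEdge |
        ST.1 ⊆ U ∧ ST.1.card = p2 ∧ ST.2 ⊆ qE U EH ST.1 ∧ IsLTree VH ST.2}
      {ST : Finset ℕ × Finset LEdge |
        ST.1 ⊆ U ∧ ST.1.card = p1 ∧ ST.2 ⊆ qE U EH ST.1 ∧ IsLTree VH ST.2} := by
    rintro ⟨S, T⟩ ⟨hS, hc, hT, ht⟩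
    exact dual_mem VH EH hEH U p2 p1 hp' S T hS hc hT ht
  refine Set.InvOn.bijOn ⟨?_, ?_⟩ h1 h2
  · rintro ⟨S, T⟩ ⟨hS, _, hT, _⟩
    exact dual_dual VH EH hEH U S T hS hT
  · rintro ⟨S, T⟩ ⟨hS, _, hT, _⟩
    exact dual_dual VH EH hEH U S T hS hT

end
end
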